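/- Let $\Omega \subset \mathbb{R}^n$ be a bounded open set satisfying a uniform exterior ball condition: there is $r_0 > 0$ such that for every $x \in \Omega$ there is a ball $B_{r_0}(z) \subset \Omega^c$ with $\mathrm{dist}(x, B_{r_0}(z)) = \delta(x)$, where $\delta(x) = \mathrm{dist}(x, \partial\Omega)$. Then for every $s \in (0,1)$ there exist constants $0 < C_1 \le C_2$ depending only on $n$, $s$, $r_0$, and $\mathrm{diam}(\Omega)$ such that $C_1\, \delta(x)^{-2s} \le \int_{\Omega^c} \frac{1}{|x-y|^{n+2s}}\, \mathrm{d}y \le C_2\, \delta(x)^{-2s}$ for all $x \in \Omega$. -/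

import Mathlib

open MeasureTheory Metric Pointwise

section Aux

variable {n : ℕ}

local notation "E" => EuclideanSpace ℝ (Fin n)

lemma aux_integrableOn {p : ℝ} (hp : (n:ℝ) < p) (x : E) {δ : ℝ} (hδ : 0 < δ) :
    IntegrableOn (fun y : E => ‖y - x‖ ^ (-p)) (ball x δ)ᶜ := by
  have hp0 : 0 < p := lt_of_le_of_lt (Nat.cast_nonneg n) hp
  have hbase : Integrable (fun y : E => (1 + ‖y‖) ^ (-p)) volume :=
    integrable_one_add_norm (by rw [finrank_euclideanSpace_fin]; exact hp)
  have hint : Integrable (fun y : E => ((1+δ)/δ)^p * (1 + ‖y - x‖) ^ (-p)) volume :=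
    (hbase.comp_sub_right x).const_mul _
  refine Integrable.mono' hint.integrableOn ?_ ?_
  · exact Measurable.aestronglyMeasurable (by fun_prop)
  · rw [ae_restrict_iff' measurableSet_ball.compl]
    filter_upwards with y hy
    have hyδ : δ ≤ ‖y - x‖ := by
      have : ¬ dist y x < δ := hy
      rw [dist_eq_norm] at this
      linarith [not_lt.1 this]
    have h1 : 0 < ‖y - x‖ := lt_of_lt_of_le hδ hyδ
    rw [Real.norm_eq_abs, abs_of_nonneg (Real.rpow_nonneg (norm_nonneg _) _)]
    set t := ‖y - x‖ with ht
    have key : (1 + t) ≤ ((1+δ)/δ) * t := by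
      rw [div_mul_eq_mul_div, le_div_iff₀ hδ]
      nlinarith
    have h2 : (1+t)^p ≤ ((1+δ)/δ)^p * t^p := by
      rw [← Real.mul_rpow (by positivity) (by positivity)]
      exact Real.rpow_le_rpow (by positivity) key hp0.le
    have htp : (0:ℝ) < t^p := Real.rpow_pos_of_pos h1 p
    have h1t : (0:ℝ) < (1+t)^p := Real.rpow_pos_of_pos (by positivity) p
    rw [Real.rpow_neg h1.le, Real.rpow_neg (by positivity : (0:ℝ) ≤ 1 + t)]
    rw [show ((1+δ)/δ)^p * ((1+t)^p)⁻¹ = ((1+δ)/δ)^p / (1+t)^p from (div_eq_mul_inv _ _).symm,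
      ← one_div, div_le_div_iff₀ htp h1t, one_mul]
    linarith [h2]


lemma aux_translate (p : ℝ) (x : E) (δ : ℝ) :
    ∫ y in (ball x δ)ᶜ, ‖y - x‖ ^ (-p) = ∫ y in (ball (0:E) δ)ᶜ, ‖y‖ ^ (-p) := by
  rw [← integral_indicator measurableSet_ball.compl,
    ← integral_indicator measurableSet_ball.compl]
  rw [← integral_add_right_eq_self
    (fun y : E => ((ball x δ)ᶜ).indicator (fun y : E => ‖y - x‖ ^ (-p)) y) x]
  congr 1
  funext v
  simp only [Set.indicator, Set.mem_compl_iff, mem_ball, dist_eq_norm,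
    add_sub_cancel_right, sub_zero]

lemma aux_scale {p : ℝ} {δ : ℝ} (hδ : 0 < δ) :
    ∫ y in (ball (0:E) δ)ᶜ, ‖y‖ ^ (-p)
      = δ ^ ((n:ℝ) - p) * ∫ y in (ball (0:E) 1)ᶜ, ‖y‖ ^ (-p) := by
  have h := MeasureTheory.Measure.setIntegral_comp_smul volume
    (fun y : E => ‖y‖ ^ (-p)) ((ball (0:E) 1)ᶜ) hδ.ne'
  have hset : δ • ((ball (0:E) 1)ᶜ) = (ball (0:E) δ)ᶜ := by
    ext y
    rw [Set.mem_smul_set_iff_inv_smul_mem₀ hδ.ne']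
    simp only [Set.mem_compl_iff, mem_ball, dist_zero_right, norm_smul,
      Real.norm_eq_abs, abs_of_pos (inv_pos.2 hδ)]
    rw [inv_mul_lt_iff₀ hδ, mul_one]
  have hLHS : ∀ y : E, ‖δ • y‖ ^ (-p) = δ ^ (-p) * ‖y‖ ^ (-p) := fun y => by
    rw [norm_smul, Real.norm_eq_abs, abs_of_pos hδ, Real.mul_rpow hδ.le (norm_nonneg _)]
  simp only [hLHS] at h
  rw [integral_const_mul, hset, finrank_euclideanSpace_fin, smul_eq_mul,
    abs_of_pos (inv_pos.2 (pow_pos hδ n))] at h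
  have hδn : (0:ℝ) < δ ^ n := pow_pos hδ n
  have : ∫ y in (ball (0:E) δ)ᶜ, ‖y‖ ^ (-p)
      = δ ^ n * (δ ^ (-p) * ∫ y in (ball (0:E) 1)ᶜ, ‖y‖ ^ (-p)) := by
    rw [h]
    field_simp
  rw [this, show (n:ℝ) - p = (n:ℝ) + (-p) by ring, Real.rpow_add hδ,
    Real.rpow_natCast]
  ring

end Aux

lemma aux_infDist_closedBall {E' : Type*} [NormedAddCommGroup E'] [NormedSpace ℝ E']
    (x z : E') {r : ℝ} (hr : 0 < r) (hd : r ≤ dist x z) :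
    infDist x (closedBall z r) = dist x z - r := by
  have hd0 : 0 < dist x z := lt_of_lt_of_le hr hd
  have hxz : ‖x - z‖ = dist x z := (dist_eq_norm x z).symm
  apply le_antisymm
  · have hq1 : z + (r / dist x z) • (x - z) ∈ closedBall z r := by
      rw [mem_closedBall, dist_eq_norm, add_sub_cancel_left, norm_smul, Real.norm_eq_abs,
        abs_of_nonneg (by positivity), hxz, div_mul_cancel₀ _ hd0.ne']
    have hq2 : dist x (z + (r / dist x z) • (x - z)) = dist x z - r := by
      rw [dist_eq_norm, sub_add_eq_sub_sub]
      have h3 : x - z - (r / dist x z) • (x - z) = (1 - r / dist x z) • (x - z) := by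
        rw [sub_smul, one_smul]
      have h4 : (0:ℝ) ≤ 1 - r / dist x z := by
        have : r / dist x z ≤ 1 := (div_le_one hd0).2 hd
        linarith
      rw [h3, norm_smul, Real.norm_eq_abs, abs_of_nonneg h4, hxz]
      field_simp
    calc infDist x (closedBall z r) ≤ dist x (z + (r / dist x z) • (x - z)) :=
          infDist_le_dist_of_mem hq1
      _ = dist x z - r := hq2
  · refine le_of_not_gt fun hlt => ?_
    obtain ⟨y, hy, hxy⟩ := (infDist_lt_iff ⟨z, mem_closedBall_self hr.le⟩).1 hlt
    have h5 : dist y z ≤ r := mem_closedBall.1 hy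
    linarith [dist_triangle x y z]

set_option maxHeartbeats 1000000 in
/-- Two-sided bound `C₁ δ(x)^{-2s} ≤ ∫_{Ωᶜ} |x-y|^{-n-2s} dy ≤ C₂ δ(x)^{-2s}` on a
bounded open set with a uniform exterior ball condition. -/
theorem stmt9 {n : ℕ} (Ω : Set (EuclideanSpace ℝ (Fin n)))
    (hopen : IsOpen Ω) (hbdd : Bornology.IsBounded Ω)
    (r0 : ℝ) (hr0 : 0 < r0)
    (hext : ∀ x ∈ Ω, ∃ z, closedBall z r0 ⊆ Ωᶜ ∧
      infDist x (closedBall z r0) = infDist x (frontier Ω))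
    (s : ℝ) (hs : s ∈ Set.Ioo (0:ℝ) 1) :
    ∃ C1 C2 : ℝ, 0 < C1 ∧ C1 ≤ C2 ∧ ∀ x ∈ Ω,
      C1 * infDist x (frontier Ω) ^ (-(2*s))
        ≤ ∫ y in Ωᶜ, 1 / dist x y ^ ((n:ℝ) + 2*s) ∧
      ∫ y in Ωᶜ, 1 / dist x y ^ ((n:ℝ) + 2*s)
        ≤ C2 * infDist x (frontier Ω) ^ (-(2*s)) := by
  obtain ⟨hs0, hs1⟩ := hs
  set p : ℝ := (n:ℝ) + 2*s with hp_def
  have hp : (n:ℝ) < p := by rw [hp_def]; linarith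
  have hp0 : 0 < p := lt_of_le_of_lt (Nat.cast_nonneg n) hp
  set I1 : ℝ := ∫ y in (ball (0 : EuclideanSpace ℝ (Fin n)) 1)ᶜ, ‖y‖ ^ (-p) with hI1
  set V1 : ℝ := (volume (ball (0 : EuclideanSpace ℝ (Fin n)) 1)).toReal with hV1
  have hV1pos : 0 < V1 :=
    ENNReal.toReal_pos (measure_ball_pos volume 0 one_pos).ne' measure_ball_lt_top.ne
  set D : ℝ := max (Metric.diam Ω) r0 with hDdef
  have hDpos : 0 < D := lt_of_lt_of_le hr0 (le_max_right _ _)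
  set C1 : ℝ := V1 * (r0/D)^n * (3:ℝ)^(-p) with hC1def
  have hC1pos : 0 < C1 :=
    mul_pos (mul_pos hV1pos (pow_pos (div_pos hr0 hDpos) n))
      (Real.rpow_pos_of_pos (by norm_num) _)
  refine ⟨C1, max I1 C1, hC1pos, le_max_right _ _, fun x hx => ?_⟩
  obtain ⟨z, hzsub, hzd⟩ := hext x hx
  have hzc : z ∈ Ωᶜ := hzsub (mem_closedBall_self hr0.le)
  have hΩne : Ω ≠ Set.univ := by intro h; exact hzc (by simp [h])
  obtain ⟨y0, hy0f, hy0d⟩ := exists_mem_frontier_infDist_compl_eq_dist hx hΩne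
  set δ : ℝ := infDist x (frontier Ω) with hδdef
  have hfsub : frontier Ω ⊆ Ωᶜ := by
    rw [hopen.frontier_eq]; exact fun y hy => hy.2
  have hkey : δ = infDist x Ωᶜ :=
    le_antisymm (hy0d ▸ infDist_le_dist_of_mem hy0f)
      (infDist_le_infDist_of_subset hfsub ⟨y0, hy0f⟩)
  have hδpos : 0 < δ := by
    rw [hkey]
    exact ((isClosed_compl_iff.2 hopen).notMem_iff_infDist_pos ⟨z, hzc⟩).1 (by simpa using hx)
  have hdist : ∀ y ∈ Ωᶜ, δ ≤ dist x y := fun y hy => hkey ▸ infDist_le_dist_of_mem hy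
  have hfun : (fun y : EuclideanSpace ℝ (Fin n) => 1 / dist x y ^ p)
      = fun y => ‖y - x‖ ^ (-p) := by
    funext y
    rw [dist_comm, dist_eq_norm, Real.rpow_neg (norm_nonneg _), one_div]
  rw [hfun]
  have hFint : IntegrableOn (fun y => ‖y - x‖ ^ (-p)) (ball x δ)ᶜ := aux_integrableOn hp x hδpos
  have hsubΩ : Ωᶜ ⊆ (ball x δ)ᶜ := fun y hy hball =>
    (not_lt.2 ((hdist y hy).trans (le_of_eq (dist_comm x y)))) (mem_ball.1 hball)
  have hFintΩ : IntegrableOn (fun y => ‖y - x‖ ^ (-p)) Ωᶜ := hFint.mono_set hsubΩ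
  constructor
  · -- lower bound
    have hxz : r0 ≤ dist x z := by
      by_contra h
      exact hzsub (mem_closedBall.2 (le_of_not_ge h)) hx
    have hdeq : dist x z = δ + r0 := by
      have h6 := aux_infDist_closedBall x z hr0 hxz
      rw [hzd] at h6
      linarith
    set ρ : ℝ := min δ r0 with hρdef
    have hρpos : 0 < ρ := lt_min hδpos hr0
    have hρδ : ρ ≤ δ := min_le_left _ _
    have hρr0 : ρ ≤ r0 := min_le_right _ _
    have hdpos : 0 < dist x z := by linarith
    set w : EuclideanSpace ℝ (Fin n) := z + ((r0 - ρ)/dist x z) • (x - z) with hwdef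
    have hc01 : 0 ≤ (r0 - ρ)/dist x z := div_nonneg (by linarith) hdpos.le
    have hxz' : ‖x - z‖ = dist x z := (dist_eq_norm x z).symm
    have hwz : dist w z = r0 - ρ := by
      rw [hwdef, dist_eq_norm, add_sub_cancel_left, norm_smul, Real.norm_eq_abs,
        abs_of_nonneg hc01, hxz', div_mul_cancel₀ _ hdpos.ne']
    have hxw : dist x w = δ + ρ := by
      rw [hwdef, dist_eq_norm, sub_add_eq_sub_sub]
      have h3 : x - z - ((r0 - ρ)/dist x z) • (x - z)
          = (1 - (r0 - ρ)/dist x z) • (x - z) := by rw [sub_smul, one_smul]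
      have h4 : (0:ℝ) ≤ 1 - (r0 - ρ)/dist x z := by
        have : (r0 - ρ)/dist x z ≤ 1 := (div_le_one hdpos).2 (by linarith)
        linarith
      rw [h3, norm_smul, Real.norm_eq_abs, abs_of_nonneg h4, hxz', hdeq]
      field_simp
      ring
    have hsubcb : closedBall w ρ ⊆ closedBall z r0 := fun y hy =>
      mem_closedBall.2 (by linarith [dist_triangle y w z, mem_closedBall.1 hy, hwz])
    have hsubΩc : closedBall w ρ ⊆ Ωᶜ := hsubcb.trans hzsub
    have hpt : ∀ y ∈ closedBall w ρ, ((3:ℝ)*δ) ^ (-p) ≤ ‖y - x‖ ^ (-p) := by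
      intro y hy
      have h2 : dist y w ≤ ρ := mem_closedBall.1 hy
      have h1 : ‖y - x‖ ≤ 3*δ := by
        calc ‖y - x‖ = dist y x := (dist_eq_norm y x).symm
          _ ≤ dist y w + dist w x := dist_triangle y w x
          _ = dist y w + dist x w := by rw [dist_comm w x]
          _ ≤ ρ + (δ + ρ) := by rw [hxw]; linarith
          _ ≤ 3*δ := by linarith
      have h0 : 0 < ‖y - x‖ :=
        lt_of_lt_of_le hδpos ((hdist y (hsubΩc hy)).trans (le_of_eq (by rw [dist_comm, dist_eq_norm])))
      exact Real.rpow_le_rpow_of_nonpos h0 h1 (by linarith)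
    have hvol : (volume (closedBall w ρ)).toReal = ρ^n * V1 := by
      rw [Measure.addHaar_closedBall volume w hρpos.le, finrank_euclideanSpace_fin,
        ENNReal.toReal_mul, ENNReal.toReal_ofReal (by positivity), hV1]
    have step1 : ∫ _y in closedBall w ρ, ((3:ℝ)*δ)^(-p)
        ≤ ∫ y in closedBall w ρ, ‖y - x‖^(-p) :=
      setIntegral_mono_on (integrableOn_const measure_closedBall_lt_top.ne)
        (hFintΩ.mono_set hsubΩc) measurableSet_closedBall hpt
    have step2 : ∫ y in closedBall w ρ, ‖y - x‖^(-p) ≤ ∫ y in Ωᶜ, ‖y - x‖^(-p) :=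
      setIntegral_mono_set hFintΩ
        (Filter.Eventually.of_forall fun y => Real.rpow_nonneg (norm_nonneg _) _)
        (HasSubset.Subset.eventuallyLE hsubΩc)
    have hδD : δ ≤ D := by
      have h7 : δ ≤ dist x y0 := infDist_le_dist_of_mem hy0f
      have h8 : dist x y0 ≤ Metric.diam (closure Ω) :=
        Metric.dist_le_diam_of_mem hbdd.closure (subset_closure hx)
          (frontier_subset_closure hy0f)
      rw [Metric.diam_closure] at h8
      exact (h7.trans h8).trans (le_max_left _ _)
    have hρge : δ * (r0/D) ≤ ρ := by
      refine le_min ?_ ?_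
      · exact mul_le_of_le_one_right hδpos.le ((div_le_one hDpos).2 (le_max_right _ _))
      · calc δ * (r0/D) ≤ D * (r0/D) := mul_le_mul_of_nonneg_right hδD (by positivity)
          _ = r0 := by field_simp
    have hδnp : δ^(n:ℕ) * δ^(-p) = δ^(-(2*s)) := by
      rw [← Real.rpow_natCast δ n, ← Real.rpow_add hδpos]
      congr 1
      rw [hp_def]; ring
    have step0 : C1 * δ ^ (-(2*s)) ≤ ∫ _y in closedBall w ρ, ((3:ℝ)*δ)^(-p) := by
      rw [setIntegral_const, measureReal_def, hvol, smul_eq_mul]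
      have hmul : ((3:ℝ)*δ)^(-p) = 3^(-p) * δ^(-p) := Real.mul_rpow (by norm_num) hδpos.le
      have hρn : (δ*(r0/D))^n ≤ ρ^n := pow_le_pow_left₀ (by positivity) hρge n
      calc C1 * δ^(-(2*s)) = V1*(r0/D)^n*(3:ℝ)^(-p) * (δ^(n:ℕ) * δ^(-p)) := by
            rw [hδnp, hC1def]
        _ = (δ*(r0/D))^n * V1 * ((3:ℝ)^(-p) * δ^(-p)) := by rw [mul_pow]; ring
        _ ≤ ρ^n * V1 * ((3:ℝ)^(-p) * δ^(-p)) := by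
            have hnn : (0:ℝ) ≤ (3:ℝ)^(-p) * δ^(-p) := by positivity
            exact mul_le_mul_of_nonneg_right (mul_le_mul_of_nonneg_right hρn hV1pos.le) hnn
        _ = ρ^n * V1 * ((3:ℝ)*δ)^(-p) := by rw [hmul]
    exact le_trans step0 (le_trans step1 step2)
  · calc ∫ y in Ωᶜ, ‖y - x‖^(-p) ≤ ∫ y in (ball x δ)ᶜ, ‖y - x‖^(-p) :=
        setIntegral_mono_set hFint
          (Filter.Eventually.of_forall fun y => Real.rpow_nonneg (norm_nonneg _) _)
          (HasSubset.Subset.eventuallyLE hsubΩ)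
      _ = ∫ y in (ball (0:EuclideanSpace ℝ (Fin n)) δ)ᶜ, ‖y‖^(-p) := aux_translate p x δ
      _ = δ^((n:ℝ)-p) * I1 := aux_scale hδpos
      _ = δ^(-(2*s)) * I1 := by rw [show (n:ℝ) - p = -(2*s) by rw [hp_def]; ring]
      _ ≤ δ^(-(2*s)) * max I1 C1 :=
          mul_le_mul_of_nonneg_left (le_max_left _ _) (Real.rpow_nonneg hδpos.le _)
      _ = max I1 C1 * δ^(-(2*s)) := mul_comm _ _
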